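/- Let H be an m×m Hermitian matrix with spectral decomposition H = Σⱼ λⱼEⱼ, and suppose u,v are parallel with respect to H (for each j, Eⱼeᵤ and Eⱼeᵥ are parallel vectors) with equal eigenvalue supports σᵤ(H) = σᵥ(H). If R is any matrix such that RH = HR and R eᵤ = eᵤ, then R eᵥ = eᵥ. -/
import Mathlib


open Matrix

theorem stmt5 {m r : ℕ} (H : Matrix (Fin m) (Fin m) ℂ)
    (lam : Fin r → ℝ) (E : Fin r → Matrix (Fin m) (Fin m) ℂ)
    (hH : H.IsHermitian)
    (hlam : Function.Injective lam)
    (hEherm : ∀ j, (E j).IsHermitian)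
    (hEidem : ∀ j, E j * E j = E j)
    (hEorth : ∀ j k, j ≠ k → E j * E k = 0)
    (hEsum : ∑ j, E j = 1)
    (hEnz : ∀ j, E j ≠ 0)
    (hspec : H = ∑ j, (lam j : ℂ) • E j)
    (u v : Fin m)
    (hpar : ∀ j, ∃ c : ℂ,
      (E j) *ᵥ (Pi.single u 1 : Fin m → ℂ) = c • ((E j) *ᵥ (Pi.single v 1 : Fin m → ℂ)))
    (hsupp : ∀ j, (E j) *ᵥ (Pi.single u 1 : Fin m → ℂ) = 0 ↔
      (E j) *ᵥ (Pi.single v 1 : Fin m → ℂ) = 0)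
    (R : Matrix (Fin m) (Fin m) ℂ)
    (hRH : R * H = H * R)
    (hRu : R *ᵥ (Pi.single u 1 : Fin m → ℂ) = Pi.single u 1) :
    R *ᵥ (Pi.single v 1 : Fin m → ℂ) = Pi.single v 1 := by
  set eu : Fin m → ℂ := Pi.single u 1
  set ev : Fin m → ℂ := Pi.single v 1
  -- H * E j = lam j • E j and E j * H = lam j • E j
  have hHE : ∀ j, H * E j = (lam j : ℂ) • E j := by
    intro j
    rw [hspec, Finset.sum_mul, Finset.sum_eq_single j]
    · rw [smul_mul_assoc, hEidem]
    · intro k _ hk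
      rw [smul_mul_assoc, hEorth k j hk, smul_zero]
    · intro h; exact absurd (Finset.mem_univ j) h
  have hEH : ∀ j, E j * H = (lam j : ℂ) • E j := by
    intro j
    rw [hspec, Finset.mul_sum, Finset.sum_eq_single j]
    · rw [mul_smul_comm, hEidem]
    · intro k _ hk
      rw [mul_smul_comm, hEorth j k (Ne.symm hk), smul_zero]
    · intro h; exact absurd (Finset.mem_univ j) h
  -- off-diagonal blocks of R vanish
  have hoff : ∀ j k, j ≠ k → E j * R * E k = 0 := by
    intro j k hjk
    have h1 : (lam j : ℂ) • (E j * R * E k) = (lam k : ℂ) • (E j * R * E k) := by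
      calc (lam j : ℂ) • (E j * R * E k) = (((lam j : ℂ) • E j) * R) * E k := by
            rw [smul_mul_assoc, smul_mul_assoc]
        _ = ((E j * H) * R) * E k := by rw [hEH]
        _ = E j * (H * R) * E k := by rw [Matrix.mul_assoc (E j) H R]
        _ = E j * (R * H) * E k := by rw [hRH]
        _ = E j * R * (H * E k) := by rw [← Matrix.mul_assoc (E j) R H, Matrix.mul_assoc (E j * R) H (E k)]
        _ = (lam k : ℂ) • (E j * R * E k) := by rw [hHE]; rw [mul_smul_comm]
    have hne : (lam j : ℂ) ≠ (lam k : ℂ) := by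
      simp only [ne_eq, Complex.ofReal_inj]
      exact fun h => hjk (hlam h)
    have := sub_eq_zero.mpr h1
    rw [← sub_smul] at this
    have h2 : (lam j : ℂ) - (lam k : ℂ) ≠ 0 := sub_ne_zero.mpr hne
    exact (smul_eq_zero.mp this).resolve_left h2
  -- R commutes with each E j
  have hcomm : ∀ j, R * E j = E j * R := by
    intro j
    have h1 : R * E j = E j * R * E j := by
      conv_lhs => rw [← one_mul R, ← hEsum, Finset.sum_mul, Finset.sum_mul]
      rw [Finset.sum_eq_single j]
      · intro k _ hk; exact hoff k j hk
      · intro h; exact absurd (Finset.mem_univ j) h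
    have h2 : E j * R = E j * R * E j := by
      conv_lhs => rw [← mul_one (E j * R), ← hEsum, Finset.mul_sum]
      rw [Finset.sum_eq_single j]
      · intro k _ hk; exact hoff j k (Ne.symm hk)
      · intro h; exact absurd (Finset.mem_univ j) h
    rw [h1, ← h2]
  -- R fixes each E j *ᵥ ev
  have hfix : ∀ j, R *ᵥ (E j *ᵥ ev) = E j *ᵥ ev := by
    intro j
    obtain ⟨c, hc⟩ := hpar j
    by_cases hz : E j *ᵥ ev = 0
    · rw [hz, mulVec_zero]
    · have hcne : c ≠ 0 := by
        rintro rfl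
        rw [zero_smul] at hc
        exact hz ((hsupp j).mp hc)
      have hEv : E j *ᵥ ev = c⁻¹ • (E j *ᵥ eu) := by
        rw [hc, smul_smul, inv_mul_cancel₀ hcne, one_smul]
      have hRu' : R *ᵥ (E j *ᵥ eu) = E j *ᵥ eu := by
        rw [Matrix.mulVec_mulVec, hcomm, ← Matrix.mulVec_mulVec, hRu]
      rw [hEv, mulVec_smul, hRu']
  -- sum up
  have sum_mv : (∑ j, E j) *ᵥ ev = ∑ j, E j *ᵥ ev := by
    ext i
    simp [Matrix.mulVec, dotProduct, Matrix.sum_apply, Finset.sum_mul]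
    rw [Finset.sum_comm]
  have hsum : ∑ j, E j *ᵥ ev = ev := by
    rw [← sum_mv, hEsum, one_mulVec]
  calc R *ᵥ ev = R *ᵥ (∑ j, E j *ᵥ ev) := by rw [hsum]
    _ = ∑ j, R *ᵥ (E j *ᵥ ev) := by
        rw [← Matrix.mulVecLin_apply, map_sum]
        simp [Matrix.mulVecLin_apply]
    _ = ∑ j, E j *ᵥ ev := Finset.sum_congr rfl (fun j _ => hfix j)
    _ = ev := hsum
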